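/- In SP_9, for any two distinct vertices u and v (adjacent by either a positive or negative edge), and any pair of signs (ε_1, ε_2) ∈ {+,−}², the number of vertices z with uz of sign ε_1 and vz of sign ε_2 is: 1 if uv has sign ε_1 = ε_2 = sign(uv); 2 if ε_1 ≠ ε_2; 2 if ε_1 = ε_2 ≠ sign(uv). -/
import Mathlib


/-- Vertices of `SP_9`, identified with `{0,1,2} × {0,1,2}`. -/
abbrev V9 : Type := Fin 3 × Fin 3

/-- The edge `uv` of `SP_9` is positive: `u ≠ v` and they agree in exactly one coordinate. -/
abbrev pos9 (u v : V9) : Prop :=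
  (u.1 = v.1 ∧ u.2 ≠ v.2) ∨ (u.1 ≠ v.1 ∧ u.2 = v.2)

/-- The edge `uv` of `SP_9` is negative: `u ≠ v` and it is not positive. -/
abbrev neg9 (u v : V9) : Prop := u ≠ v ∧ ¬ pos9 u v

/-- The identification of the labels `{0,…,8}` with `{0,1,2} × {0,1,2}`,
`i ↦ (i div 3, i mod 3)`. -/
def vnum (n : Fin 9) : V9 := (⟨n.val / 3, by omega⟩, ⟨n.val % 3, by omega⟩)

/-- The sign of the edge `uv` of `SP_9` (`true` = positive), for `u ≠ v`. -/
def sgn9 (u v : V9) : Bool := decide (pos9 u v)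

/-- Lemma 1 stated uniformly: for any edge `uv` of `SP_9` and any pair of signs
`(e₁, e₂)`, the number of vertices `z` with `uz` of sign `e₁` and `vz` of sign
`e₂` is `1` when `e₁ = e₂ = sgn(uv)`, and `2` otherwise. -/
theorem sp9_adjacency_counts :
    ∀ u v : V9, u ≠ v → ∀ e₁ e₂ : Bool,
      (Finset.univ.filter
          (fun z : V9 => z ≠ u ∧ z ≠ v ∧ sgn9 u z = e₁ ∧ sgn9 v z = e₂)).card =
        if e₁ = e₂ then (if e₁ = sgn9 u v then 1 else 2) else 2 := by
  decide
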